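/- Let L ⊆ R with D ∩ L ⊆ {max L}. Then every axiom system 𝒜 satisfying 𝒜 ∼ 𝒜_L ∪ {τ^𝒜} is inconsistent, and D_surpr^𝒜 = ∅. -/

import Mathlib

open scoped Classical

/-- Propositional formulas over the six variables `Y_r`, `r ∈ R = Fin 6`
(`0 = Mo, 1 = Tu, 2 = We, 3 = Th, 4 = Fr, 5 = none`). -/
inductive Form : Type where
  | bot : Form
  | var : Fin 6 → Form
  | imp : Form → Form → Form
deriving DecidableEq

def Form.neg (φ : Form) : Form := φ.imp .bot
def Form.top : Form := Form.neg .bot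
def Form.or (φ ψ : Form) : Form := φ.neg.imp ψ
def Form.and (φ ψ : Form) : Form := (φ.imp ψ.neg).neg

/-- Evaluation in the model `r ∈ R`: variable `Y_i` is true iff `i = r`. -/
def Form.eval (r : Fin 6) : Form → Bool
  | .bot => false
  | .var i => decide (i = r)
  | .imp φ ψ => !(Form.eval r φ) || Form.eval r ψ

/-- `r ⊨ φ`. -/
def Sat (r : Fin 6) (φ : Form) : Prop := Form.eval r φ = true

def bigOr (l : List Form) : Form := l.foldr Form.or .bot
def bigAnd (l : List Form) : Form := l.foldr Form.and Form.top

/-- `χ_B = ⋁_{r ∈ B} Y_r`. -/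
def chi (B : Finset (Fin 6)) : Form := bigOr ((B.sort (· ≤ ·)).map Form.var)

/-- The axiom `(Ax_{=1})`: exactly one of the variables `Y_r` is true. -/
def Ax1 : Form :=
  (chi Finset.univ).and
    (bigAnd ((List.finRange 6).flatMap (fun i =>
      (List.finRange 6).map (fun j =>
        if i = j then Form.top else ((Form.var i).neg).or ((Form.var j).neg)))))

/-- Provability from the axiom system `A` (by soundness and completeness of
propositional logic, semantic consequence over the six models). -/
def Proves (A : Set Form) (φ : Form) : Prop :=
  ∀ r : Fin 6, (∀ ψ ∈ A, Sat r ψ) → Sat r φ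

/-- `K` is an `A`-p-knowledge set: `A ⊢ ⟨T ∈ K⟩`. -/
def KSet (A : Set Form) (K : Finset (Fin 6)) : Prop := Proves A (chi K)

/-- `K_A`, the intersection of all `A`-p-knowledge sets. -/
noncomputable def KA (A : Set Form) : Finset (Fin 6) :=
  Finset.univ.filter (fun r => ∀ K : Finset (Fin 6), KSet A K → r ∈ K)

/-- The days `D = {Mo,…,Fr}`. -/
def DaysF : Finset (Fin 6) := {0, 1, 2, 3, 4}

/-- `⟨T ≤ d⟩`. -/
def TLe (d : Fin 6) : Form := chi (Finset.univ.filter (· ≤ d))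
/-- `⟨T ≥ d⟩`. -/
def TGe (d : Fin 6) : Form := chi (Finset.univ.filter (d ≤ ·))
/-- `⟨T = d⟩`. -/
def TEq (d : Fin 6) : Form := Form.var d

/-- Equivalence of axiom systems: mutual provability. -/
def EquivAx (A₁ A₂ : Set Form) : Prop :=
  (∀ φ ∈ A₂, Proves A₁ φ) ∧ (∀ φ ∈ A₁, Proves A₂ φ)

/-- Iverson bracket: `⊤` if `P` holds, else `⊥`. -/
noncomputable def iver (P : Prop) : Form := if P then Form.top else Form.bot

/-- The maximum of `K` (with default `Mo` for `K = ∅`). -/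
def maxD (K : Finset (Fin 6)) : Fin 6 := (K.max).getD 0

/-- `K ∖ {max K}` (with `∅ ∖ {max ∅} = ∅`). -/
def erasemax (K : Finset (Fin 6)) : Finset (Fin 6) := K.erase (maxD K)

/-- `σ^A := ⋀_{K ⊆ R} ([K_A ⊆ K] → χ_{K∖{max K}})`. -/
noncomputable def sigmaA (A : Set Form) : Form :=
  bigAnd (((Finset.univ : Finset (Finset (Fin 6))).toList).map
    (fun K => (iver (KA A ⊆ K)).imp (chi (erasemax K))))

/-- The set of `A`-p-surprising days. -/
def Dsurpr (A : Set Form) : Set (Fin 6) :=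
  {d | d ∈ DaysF ∧ d ∈ KA A ∧ ¬ Proves A (TLe d)}

/-- `A` is inconsistent iff it proves every formula. -/
def Inconsistent (A : Set Form) : Prop := ∀ φ, Proves A φ

/-- `τ^A := ⋁_{d ∈ D} ⋀_{K ⊆ R} ([A ⊢ χ_K] → [d ∈ K∖{max K}])`. -/
noncomputable def tauA (A : Set Form) : Form :=
  bigOr ((DaysF.sort (· ≤ ·)).map (fun d =>
    bigAnd (((Finset.univ : Finset (Finset (Fin 6))).toList).map
      (fun K => (iver (Proves A (chi K))).imp (iver (d ∈ erasemax K))))))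

/-- The axiom system `𝒜_L = {(Ax_{=1}), χ_L}`. -/
def AL (L : Finset (Fin 6)) : Set Form := {Ax1, chi L}

lemma eval_bigOr (r : Fin 6) (l : List Form) :
    (bigOr l).eval r = true ↔ ∃ φ ∈ l, φ.eval r = true := by
  induction l with
  | nil => simp [bigOr, Form.eval]
  | cons a t ih =>
      simp [bigOr, Form.or, Form.neg, Form.eval] at *
      rw [ih]

lemma eval_bigAnd (r : Fin 6) (l : List Form) :
    (bigAnd l).eval r = true ↔ ∀ φ ∈ l, φ.eval r = true := by
  induction l with
  | nil => simp [bigAnd, Form.top, Form.neg, Form.eval]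
  | cons a t ih =>
      simp only [bigAnd, List.foldr_cons, Form.and, Form.neg, Form.eval,
        List.mem_cons, Bool.or_false, Bool.not_false, Bool.and_true,
        Bool.not_or, Bool.not_not, Bool.and_eq_true] at *
      rw [ih]; aesop

lemma sat_chi (r : Fin 6) (B : Finset (Fin 6)) : Sat r (chi B) ↔ r ∈ B := by
  rw [Sat, chi, eval_bigOr]
  constructor
  · rintro ⟨φ, hφ, hev⟩
    simp only [List.mem_map] at hφ
    obtain ⟨i, hi, rfl⟩ := hφ
    simp [Form.eval] at hev
    subst hev
    exact (Finset.mem_sort _).mp hi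
  · intro hr
    exact ⟨Form.var r, List.mem_map_of_mem ((Finset.mem_sort _).mpr hr),
      by simp [Form.eval]⟩

lemma sat_iver (r : Fin 6) (P : Prop) : Sat r (iver P) ↔ P := by
  by_cases hP : P <;> simp [Sat, iver, hP, Form.top, Form.neg, Form.eval]

/-- If `D ∩ L ⊆ {max L}`, then every axiom system `A` with `A ∼ 𝒜_L ∪ {τ^A}`
is inconsistent, and no day is `A`-p-surprising. -/
theorem stmt_13 (L : Finset (Fin 6)) (h : DaysF ∩ L ⊆ {maxD L})
    (A : Set Form) (heq : EquivAx A (AL L ∪ {tauA A})) :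
    Inconsistent A ∧ Dsurpr A = ∅ := by
  have hchiL : chi L ∈ AL L ∪ {tauA A} := by simp [AL]
  have htau : tauA A ∈ AL L ∪ {tauA A} := by simp [AL]
  have hPL : Proves A (chi L) := heq.1 (chi L) hchiL
  have hinc : Inconsistent A := by
    intro φ r hr
    exfalso
    have hrL : r ∈ L := (sat_chi r L).mp (hPL r hr)
    have hτ : Sat r (tauA A) := heq.1 (tauA A) htau r hr
    rw [Sat, tauA, eval_bigOr] at hτ
    obtain ⟨ψ, hψ, hψt⟩ := hτ
    simp only [List.mem_map] at hψ
    obtain ⟨d, hd, rfl⟩ := hψ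
    have hd' : d ∈ DaysF := (Finset.mem_sort _).mp hd
    have hall := (eval_bigAnd r _).mp hψt
    have hK := hall ((iver (Proves A (chi L))).imp (iver (d ∈ erasemax L)))
      (List.mem_map_of_mem (Finset.mem_toList.mpr (Finset.mem_univ L)))
    have hKL : d ∈ erasemax L := by
      apply (sat_iver r (d ∈ erasemax L)).mp
      have h1 : (iver (Proves A (chi L))).eval r = true := (sat_iver r _).mpr hPL
      simpa [Sat, Form.eval, h1] using hK
    have hdmax : d = maxD L := by
      have := h (Finset.mem_inter.mpr ⟨hd', Finset.mem_of_mem_erase hKL⟩)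
      simpa using this
    exact Finset.ne_of_mem_erase hKL hdmax
  refine ⟨hinc, ?_⟩
  rw [Set.eq_empty_iff_forall_notMem]
  rintro d ⟨_, _, hnp⟩
  exact hnp (hinc _)
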